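/- For every propositional formula φ and every subset σ of sig(φ), there exists a uniform σ-interpolant for φ: a formula χ with φ ⊨ χ, sig(χ) ⊆ σ, and for every formula ψ, if φ ⊨ ψ and sig(ψ) ∩ sig(φ) ⊆ σ then χ ⊨ ψ. -/
import Mathlib


inductive PropForm : Type where
  | var : ℕ → PropForm
  | tru : PropForm
  | fls : PropForm
  | neg : PropForm → PropForm
  | conj : PropForm → PropForm → PropForm
  | disj : PropForm → PropForm → PropForm
deriving DecidableEq

namespace PropForm

def eval (v : ℕ → Bool) : PropForm → Bool
  | var p => v p
  | tru => true
  | fls => false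
  | neg φ => !(eval v φ)
  | conj φ ψ => eval v φ && eval v ψ
  | disj φ ψ => eval v φ || eval v ψ

def sig : PropForm → Finset ℕ
  | var p => {p}
  | tru => ∅
  | fls => ∅
  | neg φ => sig φ
  | conj φ ψ => sig φ ∪ sig ψ
  | disj φ ψ => sig φ ∪ sig ψ

def impl (φ ψ : PropForm) : PropForm := disj (neg φ) ψ

def iff (φ ψ : PropForm) : PropForm := conj (impl φ ψ) (impl ψ φ)

end PropForm

/-- Semantic entailment: every model of `φ` is a model of `ψ`. -/
def Entails (φ ψ : PropForm) : Prop :=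
  ∀ v : ℕ → Bool, φ.eval v = true → ψ.eval v = true

open PropForm in
def bigConj : List PropForm → PropForm
  | [] => .tru
  | φ :: L => .conj φ (bigConj L)

open PropForm in
def bigDisj : List PropForm → PropForm
  | [] => .fls
  | φ :: L => .disj φ (bigDisj L)

lemma eval_bigConj (v : ℕ → Bool) (L : List PropForm) :
    (bigConj L).eval v = true ↔ ∀ φ ∈ L, φ.eval v = true := by
  induction L with
  | nil => simp [bigConj, PropForm.eval]
  | cons φ L ih => simp [bigConj, PropForm.eval, ih]

lemma eval_bigDisj (v : ℕ → Bool) (L : List PropForm) :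
    (bigDisj L).eval v = true ↔ ∃ φ ∈ L, φ.eval v = true := by
  induction L with
  | nil => simp [bigDisj, PropForm.eval]
  | cons φ L ih => simp [bigDisj, PropForm.eval, ih]

lemma sig_bigConj (L : List PropForm) (σ : Finset ℕ) (h : ∀ φ ∈ L, PropForm.sig φ ⊆ σ) :
    (bigConj L).sig ⊆ σ := by
  induction L with
  | nil => simp [bigConj, PropForm.sig]
  | cons φ L ih =>
    simp only [bigConj, PropForm.sig, Finset.union_subset_iff]
    exact ⟨h φ (by simp), ih fun ψ hψ => h ψ (by simp [hψ])⟩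

lemma sig_bigDisj (L : List PropForm) (σ : Finset ℕ) (h : ∀ φ ∈ L, PropForm.sig φ ⊆ σ) :
    (bigDisj L).sig ⊆ σ := by
  induction L with
  | nil => simp [bigDisj, PropForm.sig]
  | cons φ L ih =>
    simp only [bigDisj, PropForm.sig, Finset.union_subset_iff]
    exact ⟨h φ (by simp), ih fun ψ hψ => h ψ (by simp [hψ])⟩

lemma eval_congr (φ : PropForm) (v w : ℕ → Bool) (h : ∀ p ∈ φ.sig, v p = w p) :
    φ.eval v = φ.eval w := by
  induction φ with
  | var p => exact h p (by simp [PropForm.sig])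
  | tru => rfl
  | fls => rfl
  | neg φ ih => simp [PropForm.eval, ih h]
  | conj φ ψ ihφ ihψ =>
    simp only [PropForm.eval]
    rw [ihφ fun p hp => h p (by simp [PropForm.sig, hp]),
        ihψ fun p hp => h p (by simp [PropForm.sig, hp])]
  | disj φ ψ ihφ ihψ =>
    simp only [PropForm.eval]
    rw [ihφ fun p hp => h p (by simp [PropForm.sig, hp]),
        ihψ fun p hp => h p (by simp [PropForm.sig, hp])]

/-- The cube of literals over `σ` with sign pattern given by membership in `s`. -/
noncomputable def cube (σ s : Finset ℕ) : PropForm :=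
  bigConj (σ.toList.map fun p => if p ∈ s then .var p else .neg (.var p))

lemma eval_cube (σ s : Finset ℕ) (v : ℕ → Bool) :
    (cube σ s).eval v = true ↔ ∀ p ∈ σ, v p = decide (p ∈ s) := by
  rw [cube, eval_bigConj]
  constructor
  · intro h p hp
    have := h _ (List.mem_map.2 ⟨p, by simp [hp], rfl⟩)
    by_cases hps : p ∈ s <;> simp_all [PropForm.eval]
  · intro h ψ hψ
    obtain ⟨p, hp, rfl⟩ := List.mem_map.1 hψ
    have := h p (by simpa using hp)
    by_cases hps : p ∈ s <;> simp_all [PropForm.eval]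

lemma sig_cube (σ s : Finset ℕ) : (cube σ s).sig ⊆ σ := by
  apply sig_bigConj
  intro ψ hψ
  obtain ⟨p, hp, rfl⟩ := List.mem_map.1 hψ
  by_cases hps : p ∈ s <;> simp_all [PropForm.sig, Finset.singleton_subset_iff]

open Classical in
/-- Uniform Interpolation Property of propositional logic. -/
theorem uniform_interpolation (φ : PropForm) (σ : Finset ℕ) (hσ : σ ⊆ φ.sig) :
    ∃ χ : PropForm, Entails φ χ ∧ χ.sig ⊆ σ ∧
      ∀ ψ : PropForm, Entails φ ψ → ψ.sig ∩ φ.sig ⊆ σ → Entails χ ψ := by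
  classical
  set P : Finset ℕ → Prop := fun s => ∃ w : ℕ → Bool, φ.eval w = true ∧
    ∀ p ∈ σ, w p = decide (p ∈ s) with hP
  set χ := bigDisj ((σ.powerset.filter P).toList.map (cube σ)) with hχ
  -- key: eval v χ = true ↔ ∃ w, eval w φ = true ∧ w agrees with v on σ
  have key : ∀ v : ℕ → Bool, χ.eval v = true →
      ∃ w : ℕ → Bool, φ.eval w = true ∧ ∀ p ∈ σ, w p = v p := by
    intro v hv
    rw [hχ, eval_bigDisj] at hv
    obtain ⟨ψ, hψmem, hψeval⟩ := hv
    obtain ⟨s, hs, rfl⟩ := List.mem_map.1 hψmem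
    rw [Finset.mem_toList, Finset.mem_filter] at hs
    obtain ⟨w, hw, hws⟩ := hs.2
    refine ⟨w, hw, fun p hp => ?_⟩
    rw [hws p hp, ← (eval_cube σ s v).1 hψeval p hp]
  refine ⟨χ, ?_, ?_, ?_⟩
  · -- φ ⊨ χ
    intro v hv
    rw [hχ, eval_bigDisj]
    refine ⟨cube σ (σ.filter (fun p => v p = true)), List.mem_map.2
      ⟨σ.filter (fun p => v p = true), ?_, rfl⟩, ?_⟩
    · rw [Finset.mem_toList, Finset.mem_filter]
      refine ⟨Finset.mem_powerset.2 (Finset.filter_subset _ _), v, hv, fun p hp => ?_⟩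
      by_cases h : v p = true <;> simp [Finset.mem_filter, hp, h]
    · rw [eval_cube]
      intro p hp
      by_cases h : v p = true <;> simp [Finset.mem_filter, hp, h]
  · -- sig χ ⊆ σ
    apply sig_bigDisj
    intro ψ hψ
    obtain ⟨s, _, rfl⟩ := List.mem_map.1 hψ
    exact sig_cube σ s
  · -- χ ⊨ ψ
    intro ψ hφψ hsig v hv
    obtain ⟨w, hw, hws⟩ := key v hv
    set u : ℕ → Bool := fun p => if p ∈ φ.sig then w p else v p with hu
    have hφu : φ.eval u = true := by
      rw [eval_congr φ u w (fun p hp => by simp [hu, hp])]; exact hw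
    have := hφψ u hφu
    rw [eval_congr ψ u v (fun p hp => ?_)] at this
    · exact this
    · by_cases hpφ : p ∈ φ.sig
      · have : p ∈ σ := hsig (Finset.mem_inter.2 ⟨hp, hpφ⟩)
        simp [hu, hpφ, hws p this]
      · simp [hu, hpφ]
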